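/- Let p ∈ P(w) with w in the simplex {w : ∑ w_i = 1, w_i ≥ ε}, where ε < ρⁿ/n and ρ ∈ (0,1] is the envy-threshold constant. Then there exists a player i with w_i > ε who envies no other player under p. -/

import Mathlib

open scoped Classical

section StmtAux

variable {n m k : ℕ} (A : Fin k → Fin n → Finset (Fin m))
    (u : Fin n → Finset (Fin m) → ℝ)
    (w : Fin n → ℝ) (p : Fin k → ℝ)

lemma stmt10_key_le (hp0 : ∀ j, 0 ≤ p j) (hp1 : ∑ j, p j = 1)
    (hP : ∀ q : Fin k → ℝ, (∀ j, 0 ≤ q j) → ∑ j, q j = 1 →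
      ∑ i, w i * ∑ j, q j * u i (A j i) ≤ ∑ i, w i * ∑ j, p j * u i (A j i))
    (σ : Fin k → Fin k) :
    ∑ i, w i * ∑ j, p j * u i (A (σ j) i) ≤ ∑ i, w i * ∑ j, p j * u i (A j i) := by
  classical
  set q : Fin k → ℝ := fun l => ∑ j ∈ Finset.univ.filter fun j => σ j = l, p j with hq
  have hq0 : ∀ l, 0 ≤ q l := fun l => Finset.sum_nonneg fun j _ => hp0 j
  have hq1 : ∑ l, q l = 1 := by
    rw [← hp1]; exact Finset.sum_fiberwise _ _ _
  have hobj : ∀ i, ∑ l, q l * u i (A l i) = ∑ j, p j * u i (A (σ j) i) := by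
    intro i
    calc ∑ l, q l * u i (A l i)
        = ∑ l, ∑ j ∈ Finset.univ.filter fun j => σ j = l, p j * u i (A (σ j) i) := by
          refine Finset.sum_congr rfl fun l _ => ?_
          rw [hq, Finset.sum_mul]
          exact Finset.sum_congr rfl fun j hj => by
            rw [(Finset.mem_filter.mp hj).2]
      _ = ∑ j, p j * u i (A (σ j) i) := Finset.sum_fiberwise _ _ _
  have := hP q hq0 hq1
  calc ∑ i, w i * ∑ j, p j * u i (A (σ j) i)
      = ∑ i, w i * ∑ l, q l * u i (A l i) := by
        exact Finset.sum_congr rfl fun i _ => by rw [hobj i]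
    _ ≤ _ := this

lemma stmt10_perm_realize
    (hswap : ∀ j : Fin k, ∀ g h : Fin n, ∃ l : Fin k,
      (∀ i, i ≠ g → i ≠ h → A l i = A j i) ∧ A l g = A j h ∧ A l h = A j g)
    (π : Equiv.Perm (Fin n)) : ∀ j : Fin k, ∃ l, ∀ i, A l i = A j (π i) := by
  refine Equiv.Perm.swap_induction_on π ?_ ?_
  · intro j; exact ⟨j, fun i => rfl⟩
  · intro f x y hxy ih j
    obtain ⟨j', hj'1, hj'2, hj'3⟩ := hswap j x y
    have hj' : ∀ i, A j' i = A j (Equiv.swap x y i) := by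
      intro i
      rcases eq_or_ne i x with rfl | hix
      · rw [Equiv.swap_apply_left]; exact hj'2
      rcases eq_or_ne i y with rfl | hiy
      · rw [Equiv.swap_apply_right]; exact hj'3
      · rw [Equiv.swap_apply_of_ne_of_ne hix hiy]; exact hj'1 i hix hiy
    obtain ⟨l, hl⟩ := ih j'
    refine ⟨l, fun i => ?_⟩
    rw [hl i, hj' (f i)]
    rfl

lemma stmt10_no_improving_perm (hw0 : ∀ i, 0 < w i)
    (hp0 : ∀ j, 0 ≤ p j) (hp1 : ∑ j, p j = 1)
    (hP : ∀ q : Fin k → ℝ, (∀ j, 0 ≤ q j) → ∑ j, q j = 1 →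
      ∑ i, w i * ∑ j, q j * u i (A j i) ≤ ∑ i, w i * ∑ j, p j * u i (A j i))
    (hswap : ∀ j : Fin k, ∀ g h : Fin n, ∃ l : Fin k,
      (∀ i, i ≠ g → i ≠ h → A l i = A j i) ∧ A l g = A j h ∧ A l h = A j g)
    (π : Equiv.Perm (Fin n))
    (hle : ∀ i, ∑ j, p j * u i (A j i) ≤ ∑ j, p j * u i (A j (π i)))
    (hlt : ∃ i, ∑ j, p j * u i (A j i) < ∑ j, p j * u i (A j (π i))) : False := by
  choose σ hσ using stmt10_perm_realize A hswap π
  have hk := stmt10_key_le A u w p hp0 hp1 hP σ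
  have heq : ∀ i, ∑ j, p j * u i (A (σ j) i) = ∑ j, p j * u i (A j (π i)) :=
    fun i => Finset.sum_congr rfl fun j _ => by rw [hσ j i]
  obtain ⟨i0, hi0⟩ := hlt
  have hlt2 : ∑ i, w i * ∑ j, p j * u i (A j i) < ∑ i, w i * ∑ j, p j * u i (A (σ j) i) := by
    apply Finset.sum_lt_sum
    · intro i _; rw [heq i]; exact mul_le_mul_of_nonneg_left (hle i) (hw0 i).le
    · exact ⟨i0, Finset.mem_univ _, by rw [heq i0]; exact (mul_lt_mul_iff_right₀ (hw0 i0)).mpr hi0⟩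
  linarith

end StmtAux

section StmtAux2

variable {n m k : ℕ} (A : Fin k → Fin n → Finset (Fin m))
    (u : Fin n → Finset (Fin m) → ℝ)
    (w : Fin n → ℝ) (p : Fin k → ℝ)

lemma stmt10_envy_step
    (hswap : ∀ j : Fin k, ∀ g h : Fin n, ∃ l : Fin k,
      (∀ i, i ≠ g → i ≠ h → A l i = A j i) ∧ A l g = A j h ∧ A l h = A j g)
    (ρ : ℝ)
    (hne : (Finset.univ.filter fun t : Fin n × Fin n × Fin k =>
        u t.1 (A t.2.2 t.1) < u t.1 (A t.2.2 t.2.1) ∧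
        u t.2.1 (A t.2.2 t.1) < u t.2.1 (A t.2.2 t.2.1)).Nonempty)
    (hρ : ρ = (1 / 2) * (Finset.univ.filter fun t : Fin n × Fin n × Fin k =>
        u t.1 (A t.2.2 t.1) < u t.1 (A t.2.2 t.2.1) ∧
        u t.2.1 (A t.2.2 t.1) < u t.2.1 (A t.2.2 t.2.1)).inf' hne
        (fun t => (u t.1 (A t.2.2 t.2.1) - u t.1 (A t.2.2 t.1)) /
          (u t.2.1 (A t.2.2 t.2.1) - u t.2.1 (A t.2.2 t.1))))
    (hw0 : ∀ i, 0 < w i)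
    (hp0 : ∀ j, 0 ≤ p j) (hp1 : ∑ j, p j = 1)
    (hP : ∀ q : Fin k → ℝ, (∀ j, 0 ≤ q j) → ∑ j, q j = 1 →
      ∑ i, w i * ∑ j, q j * u i (A j i) ≤ ∑ i, w i * ∑ j, p j * u i (A j i))
    (i h : Fin n)
    (henvy : ∑ j, p j * u i (A j i) < ∑ j, p j * u i (A j h)) :
    ρ * w i < w h := by
  classical
  by_contra hcon
  push_neg at hcon
  have hih : i ≠ h := by rintro rfl; exact lt_irrefl _ henvy
  set σ : Fin k → Fin k := fun j =>
    if u i (A j i) < u i (A j h) then (hswap j i h).choose else j with hσdef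
  set g : Fin n → ℝ := fun x =>
    w x * ∑ j, p j * u x (A (σ j) x) - w x * ∑ j, p j * u x (A j x) with hgdef
  have h0 : ∑ x, g x ≤ 0 := by
    have := stmt10_key_le A u w p hp0 hp1 hP σ
    rw [hgdef]
    rw [Finset.sum_sub_distrib]
    linarith
  have hzero : ∀ x ∈ Finset.univ, x ∉ ({i, h} : Finset (Fin n)) → g x = 0 := by
    intro x _ hx
    simp only [Finset.mem_insert, Finset.mem_singleton, not_or] at hx
    have hAx : ∀ j, A (σ j) x = A j x := by
      intro j
      rw [hσdef]
      by_cases hc : u i (A j i) < u i (A j h)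
      · simp only [if_pos hc]
        exact (hswap j i h).choose_spec.1 x hx.1 hx.2
      · simp only [if_neg hc]
    simp only [hgdef]
    rw [Finset.sum_congr rfl fun j _ => by rw [hAx j]]
    ring
  have hpair : ∑ x, g x = g i + g h := by
    rw [← Finset.sum_subset (Finset.subset_univ ({i, h} : Finset (Fin n))) hzero]
    exact Finset.sum_pair hih
  -- per-j bound
  have claim : ∀ j, p j * ((w i / 2) * (u i (A j h) - u i (A j i)))
      ≤ (w i * (p j * u i (A (σ j) i)) - w i * (p j * u i (A j i)))
        + (w h * (p j * u h (A (σ j) h)) - w h * (p j * u h (A j h))) := by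
    intro j
    by_cases hc : u i (A j i) < u i (A j h)
    · have hσj : σ j = (hswap j i h).choose := by rw [hσdef]; simp [hc]
      obtain ⟨-, hs2, hs3⟩ := (hswap j i h).choose_spec
      rw [hσj, hs2, hs3]
      by_cases he : u h (A j i) < u h (A j h)
      · have hmem : (⟨i, h, j⟩ : Fin n × Fin n × Fin k) ∈
            (Finset.univ.filter fun t : Fin n × Fin n × Fin k =>
              u t.1 (A t.2.2 t.1) < u t.1 (A t.2.2 t.2.1) ∧
              u t.2.1 (A t.2.2 t.1) < u t.2.1 (A t.2.2 t.2.1)) := by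
          simp only [Finset.mem_filter, Finset.mem_univ, true_and]
          exact ⟨hc, he⟩
        have hinf := Finset.inf'_le (f := fun t : Fin n × Fin n × Fin k =>
            (u t.1 (A t.2.2 t.2.1) - u t.1 (A t.2.2 t.1)) /
              (u t.2.1 (A t.2.2 t.2.1) - u t.2.1 (A t.2.2 t.1))) hmem
        have hE : (0:ℝ) < u h (A j h) - u h (A j i) := by linarith
        have h2ρ : 2 * ρ ≤ (u i (A j h) - u i (A j i)) / (u h (A j h) - u h (A j i)) := by
          rw [hρ]; linarith [hinf]
        have hDE : 2 * ρ * (u h (A j h) - u h (A j i)) ≤ u i (A j h) - u i (A j i) :=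
          (le_div_iff₀ hE).mp h2ρ
        nlinarith [hw0 i, hp0 j, mul_le_mul_of_nonneg_right hcon hE.le,
          mul_le_mul_of_nonneg_left hDE (hw0 i).le,
          mul_le_mul_of_nonneg_left
            (sub_nonneg.mpr (mul_le_mul_of_nonneg_right hcon hE.le)) (hp0 j),
          mul_le_mul_of_nonneg_left
            (sub_nonneg.mpr (mul_le_mul_of_nonneg_left hDE (hw0 i).le)) (hp0 j)]
      · push_neg at he
        nlinarith [hw0 i, hw0 h, hp0 j,
          mul_nonneg (hp0 j) (mul_nonneg (hw0 i).le (by linarith : (0:ℝ) ≤ u i (A j h) - u i (A j i))),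
          mul_nonneg (hp0 j) (mul_nonneg (hw0 h).le (by linarith : (0:ℝ) ≤ u h (A j i) - u h (A j h)))]
    · have hσj : σ j = j := by rw [hσdef]; simp [hc]
      rw [hσj]
      push_neg at hc
      nlinarith [mul_nonneg (hp0 j) (mul_nonneg (div_nonneg (hw0 i).le (by norm_num : (0:ℝ) ≤ 2)) (by linarith : (0:ℝ) ≤ u i (A j i) - u i (A j h)))]
  have hsum : ∑ j, p j * ((w i / 2) * (u i (A j h) - u i (A j i))) ≤ g i + g h := by
    have : g i + g h = ∑ j, ((w i * (p j * u i (A (σ j) i)) - w i * (p j * u i (A j i)))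
        + (w h * (p j * u h (A (σ j) h)) - w h * (p j * u h (A j h)))) := by
      simp only [hgdef, Finset.mul_sum, ← Finset.sum_sub_distrib, ← Finset.sum_add_distrib]
    rw [this]
    exact Finset.sum_le_sum fun j _ => claim j
  have heqsum : ∑ j, p j * ((w i / 2) * (u i (A j h) - u i (A j i)))
      = (w i / 2) * ((∑ j, p j * u i (A j h)) - ∑ j, p j * u i (A j i)) := by
    rw [← Finset.sum_sub_distrib, Finset.mul_sum]
    exact Finset.sum_congr rfl fun j _ => by ring
  have hpos : 0 < ∑ j, p j * ((w i / 2) * (u i (A j h) - u i (A j i))) := by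
    rw [heqsum]
    have := hw0 i
    have := sub_pos.mpr henvy
    positivity
  have hfin : (0:ℝ) < ∑ x, g x := by
    rw [hpair]; exact lt_of_lt_of_le hpos hsum
  exact absurd h0 (not_le.mpr hfin)

end StmtAux2



open scoped Classical in
/-- If p ∈ P(w) with w in the ε-simplex, ε < ρⁿ/n where ρ ∈ (0,1] is
the envy-threshold constant, then some player i with w_i > ε envies no one. -/
theorem stmt10 {n m k : ℕ} (A : Fin k → Fin n → Finset (Fin m))
    (u : Fin n → Finset (Fin m) → ℝ)
    (hu : ∀ i S, 1 ≤ u i S ∧ u i S ≤ 2)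
    (hswap : ∀ j : Fin k, ∀ g h : Fin n, ∃ l : Fin k,
      (∀ i, i ≠ g → i ≠ h → A l i = A j i) ∧ A l g = A j h ∧ A l h = A j g)
    (ρ : ℝ)
    (hne : (Finset.univ.filter fun t : Fin n × Fin n × Fin k =>
        u t.1 (A t.2.2 t.1) < u t.1 (A t.2.2 t.2.1) ∧
        u t.2.1 (A t.2.2 t.1) < u t.2.1 (A t.2.2 t.2.1)).Nonempty)
    (hρ : ρ = (1 / 2) * (Finset.univ.filter fun t : Fin n × Fin n × Fin k =>
        u t.1 (A t.2.2 t.1) < u t.1 (A t.2.2 t.2.1) ∧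
        u t.2.1 (A t.2.2 t.1) < u t.2.1 (A t.2.2 t.2.1)).inf' hne
        (fun t => (u t.1 (A t.2.2 t.2.1) - u t.1 (A t.2.2 t.1)) /
          (u t.2.1 (A t.2.2 t.2.1) - u t.2.1 (A t.2.2 t.1))))
    (hρ0 : 0 < ρ) (hρ1 : ρ ≤ 1)
    (ε : ℝ) (hε : 0 < ε) (hεsmall : ε < ρ ^ n / n)
    (w : Fin n → ℝ) (hwsum : ∑ i, w i = 1) (hwε : ∀ i, ε ≤ w i)
    (p : Fin k → ℝ) (hp0 : ∀ j, 0 ≤ p j) (hp1 : ∑ j, p j = 1)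
    (hP : ∀ q : Fin k → ℝ, (∀ j, 0 ≤ q j) → ∑ j, q j = 1 →
      ∑ i, w i * ∑ j, q j * u i (A j i) ≤ ∑ i, w i * ∑ j, p j * u i (A j i)) :
    ∃ i : Fin n, ε < w i ∧ ∀ h : Fin n,
      ¬ (∑ j, p j * u i (A j i) < ∑ j, p j * u i (A j h)) := by
  classical
  have hn0 : 0 < n := by
    obtain ⟨t, -⟩ := hne
    exact t.1.pos
  have hw0 : ∀ i, 0 < w i := fun i => lt_of_lt_of_le hε (hwε i)
  have envy_step : ∀ i h : Fin n,
      (∑ j, p j * u i (A j i) < ∑ j, p j * u i (A j h)) → ρ * w i < w h :=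
    fun i h => stmt10_envy_step A u w p hswap ρ hne hρ hw0 hp0 hp1 hP i h
  have no_improving_perm : ∀ π : Equiv.Perm (Fin n),
      (∀ i, ∑ j, p j * u i (A j i) ≤ ∑ j, p j * u i (A j (π i))) →
      (∃ i, ∑ j, p j * u i (A j i) < ∑ j, p j * u i (A j (π i))) → False :=
    fun π hle hlt => stmt10_no_improving_perm A u w p hw0 hp0 hp1 hP hswap π hle hlt
  classical
  by_contra hcontra
  push_neg at hcontra
  -- hcontra : ∀ i, ε < w i → ∃ h, envy
  have hnR : (0:ℝ) < (n:ℝ) := by exact_mod_cast hn0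
  haveI : Nonempty (Fin n) := ⟨⟨0, hn0⟩⟩
  -- a player with weight ≥ 1/n
  obtain ⟨i0, -, hi0⟩ : ∃ i ∈ Finset.univ, 1 / (n:ℝ) ≤ w i := by
    apply Finset.exists_le_of_sum_le Finset.univ_nonempty
    rw [hwsum, Finset.sum_const, Finset.card_univ, Fintype.card_fin]
    rw [nsmul_eq_mul]
    rw [mul_one_div, div_self (ne_of_gt hnR)]
  set f : Fin n → Fin n := fun i =>
    if hx : ∃ h', ∑ j, p j * u i (A j i) < ∑ j, p j * u i (A j h') then hx.choose else i
    with hfdef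
  set S : ℕ → Fin n := fun t => f^[t] i0 with hSdef
  have hstep : ∀ i : Fin n, ε < w i →
      ∑ j, p j * u i (A j i) < ∑ j, p j * u i (A j (f i)) := by
    intro i hi
    have hx := hcontra i hi
    rw [hfdef]
    simp only [dif_pos hx]
    exact hx.choose_spec
  have hρn : ρ ^ n / n ≤ 1 / n := by
    gcongr
    exact pow_le_one₀ hρ0.le hρ1
  have claimA : ∀ t, t ≤ n → ρ ^ t / n ≤ w (S t) := by
    intro t
    induction t with
    | zero => intro _; simpa [hSdef] using hi0
    | succ t ih =>
      intro ht
      have ht' : t ≤ n := Nat.le_of_succ_le ht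
      have hwt : ε < w (S t) := by
        have h1 : ρ ^ n ≤ ρ ^ t := pow_le_pow_of_le_one hρ0.le hρ1 ht'
        have h2 : ρ ^ n / n ≤ ρ ^ t / n := by gcongr
        linarith [ih ht']
      have henvy := hstep (S t) hwt
      have hSsucc : S (t + 1) = f (S t) := by
        rw [hSdef]; exact Function.iterate_succ_apply' f t i0
      have hlt := envy_step (S t) (f (S t)) henvy
      rw [hSsucc]
      have : ρ * (ρ ^ t / n) ≤ ρ * w (S t) := by
        have := ih ht'
        nlinarith
      calc ρ ^ (t + 1) / n = ρ * (ρ ^ t / n) := by ring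
        _ ≤ ρ * w (S t) := this
        _ ≤ w (f (S t)) := hlt.le
  have claimE : ∀ t, t ≤ n →
      ∑ j, p j * u (S t) (A j (S t)) < ∑ j, p j * u (S t) (A j (S (t+1))) := by
    intro t ht
    have hwt : ε < w (S t) := by
      have h1 : ρ ^ n ≤ ρ ^ t := pow_le_pow_of_le_one hρ0.le hρ1 ht
      have h2 : ρ ^ n / n ≤ ρ ^ t / n := by gcongr
      linarith [claimA t ht]
    have hSsucc : S (t + 1) = f (S t) := by
      rw [hSdef]; exact Function.iterate_succ_apply' f t i0
    rw [hSsucc]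
    exact hstep (S t) hwt
  -- pigeonhole
  have hninj : ¬ Function.Injective (fun t : Fin (n+1) => S t.1) := by
    intro hinj
    have := Fintype.card_le_of_injective _ hinj
    simp only [Fintype.card_fin] at this
    omega
  rw [Function.not_injective_iff] at hninj
  obtain ⟨a, b, hab, hne'⟩ := hninj
  have hQ : ∃ t', ∃ s', s' < t' ∧ t' ≤ n ∧ S s' = S t' := by
    have hab' : a.1 ≠ b.1 := fun h => hne' (Fin.ext h)
    rcases lt_or_gt_of_ne hab' with hlt | hlt
    · exact ⟨b.1, a.1, hlt, Nat.lt_succ_iff.mp b.2, hab⟩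
    · exact ⟨a.1, b.1, hlt, Nat.lt_succ_iff.mp a.2, hab.symm⟩
  have hQ' : ∃ t', ∃ s', s' < t' ∧ S s' = S t' := by
    obtain ⟨t', s', h1, h2, h3⟩ := hQ; exact ⟨t', s', h1, h3⟩
  set T := Nat.find hQ' with hTdef
  obtain ⟨Sm, hSmT, hSeqT⟩ := Nat.find_spec hQ'
  have hTn : T ≤ n := by
    obtain ⟨t', s', h1, h2, h3⟩ := hQ
    exact le_trans (Nat.find_le ⟨s', h1, h3⟩) h2
  set c := T - Sm with hcdef
  have hc0 : 0 < c := Nat.sub_pos_of_lt hSmT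
  have hSmc : Sm + c = T := by omega
  set L : List (Fin n) := (List.range c).map (fun r => S (Sm + r)) with hLdef
  have hLlen : L.length = c := by simp [hLdef]
  have hLnodup : L.Nodup := by
    rw [hLdef]
    refine List.Nodup.map_on ?_ List.nodup_range
    intro x hx y hy hxy
    simp only [List.mem_range] at hx hy
    by_contra hne2
    rcases lt_or_gt_of_ne hne2 with hlt | hlt
    · exact Nat.find_min hQ' (show Sm + y < T by omega) ⟨Sm + x, by omega, hxy⟩
    · exact Nat.find_min hQ' (show Sm + x < T by omega) ⟨Sm + y, by omega, hxy.symm⟩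
  set π := L.formPerm with hπdef
  have hπmem : ∀ r, r < c → π (S (Sm + r)) = S (Sm + r + 1) := by
    intro r hr
    have hrL : r < L.length := by rw [hLlen]; exact hr
    have hgr : L[r]'hrL = S (Sm + r) := by simp [hLdef]
    have h1 := List.formPerm_apply_getElem L hLnodup r hrL
    rw [hgr] at h1
    rw [hπdef, h1]
    rcases Nat.lt_or_ge (r + 1) c with hlt | hge
    · have hmod : (r + 1) % L.length = r + 1 := by
        rw [hLlen]; exact Nat.mod_eq_of_lt hlt
      simp only [hmod]
      have : L[r+1]'(by rw [hLlen]; exact hlt) = S (Sm + (r+1)) := by simp [hLdef]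
      exact this
    · have hrc : r + 1 = c := by omega
      have hmod : (r + 1) % L.length = 0 := by rw [hLlen, hrc, Nat.mod_self]
      simp only [hmod]
      have h0 : L[0]'(by rw [hLlen]; exact hc0) = S Sm := by simp [hLdef]
      rw [h0, hSeqT]
      congr 1
      omega
  have hπE : ∀ i ∈ L, ∑ j, p j * u i (A j i) < ∑ j, p j * u i (A j (π i)) := by
    intro i hi
    rw [hLdef, List.mem_map] at hi
    obtain ⟨r, hr, rfl⟩ := hi
    rw [List.mem_range] at hr
    rw [hπmem r hr]
    exact claimE (Sm + r) (by omega)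
  refine no_improving_perm π ?_ ?_
  · intro i
    by_cases hi : i ∈ L
    · exact (hπE i hi).le
    · rw [hπdef, List.formPerm_apply_of_notMem hi]
  · refine ⟨S (Sm + 0), ?_⟩
    exact hπE _ (by rw [hLdef]; exact List.mem_map.mpr ⟨0, List.mem_range.mpr hc0, rfl⟩)
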